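/- For t ∈ [0,1] and a fixed unit vector σ with σ·v > 0 on its domain, the map v ↦ v + t(v'-v) where v' = (v+|v|σ)/2 has Jacobian determinant bounded below by a positive constant uniform in t and σ; consequently, for any φ ∈ L²(ℝ³), ∫ |D²φ(v+t(v'-v))|² dv ≤ C ∫ |D²φ(v)|² dv with C independent of t and σ. -/

import Mathlib

open MeasureTheory RealInnerProductSpace

noncomputable section StmtAux

private abbrev E3 := EuclideanSpace ℝ (Fin 3)

private lemma stmt6_norm_fderiv (v : E3) (hv : v ≠ 0) :
    HasFDerivAt (fun w : E3 => ‖w‖) (‖v‖⁻¹ • innerSL ℝ v) v := by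
  have h1 : HasFDerivAt (fun w : E3 => ‖w‖^2) (2 • (innerSL ℝ v)) v := by
    simpa using (hasFDerivAt_id v).norm_sq
  have h2 := h1.sqrt (pow_ne_zero 2 (norm_ne_zero_iff.2 hv))
  have e1 : (fun y : E3 => Real.sqrt (‖y‖^2)) = fun y : E3 => ‖y‖ :=
    funext fun y => by rw [Real.sqrt_sq (norm_nonneg y)]
  rw [e1] at h2
  refine h2.congr_fderiv ?_
  rw [Real.sqrt_sq (norm_nonneg v)]
  ext w
  have : ‖v‖ ≠ 0 := norm_ne_zero_iff.2 hv
  simp [smul_smul]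
  field_simp

private def stmt6_Dmap (t : ℝ) (σ v : E3) : E3 →L[ℝ] E3 :=
  ContinuousLinearMap.id ℝ E3 + t • ((1/2 : ℝ) •
    (ContinuousLinearMap.id ℝ E3 + (‖v‖⁻¹ • innerSL ℝ v).smulRight σ)
     - ContinuousLinearMap.id ℝ E3)

private lemma stmt6_hasFDeriv (t : ℝ) (σ v : E3) (hv : v ≠ 0) :
    HasFDerivAt (fun w : E3 => w + t • ((1/2 : ℝ) • (w + ‖w‖ • σ) - w))
      (stmt6_Dmap t σ v) v := by
  have hn := stmt6_norm_fderiv v hv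
  have h := (hasFDerivAt_id v).add (hn.smul_const σ)
  exact (hasFDerivAt_id v).add (((h.const_smul (1/2 : ℝ)).sub (hasFDerivAt_id v)).const_smul t)

private lemma stmt6_det_bound (t : ℝ) (σ v : E3) (ht : t ∈ Set.Icc (0:ℝ) 1)
    (hv : 0 < ⟪σ, v⟫) :
    (1/8 : ℝ) ≤ |LinearMap.det ((stmt6_Dmap t σ v) : E3 →ₗ[ℝ] E3)| := by
  have hv0 : v ≠ 0 := by rintro rfl; simp at hv
  have hnv : (0:ℝ) < ‖v‖ := norm_pos_iff.2 hv0
  have hA : (1/2 : ℝ) ≤ 1 - t/2 := by linarith [ht.2]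
  have hA0 : (1 - t/2 : ℝ) ≠ 0 := by linarith
  set b := (EuclideanSpace.basisFun (Fin 3) ℝ).toBasis with hb
  rw [← LinearMap.det_toMatrix b]
  have hM : (LinearMap.toMatrix b b ((stmt6_Dmap t σ v) : E3 →ₗ[ℝ] E3)) =
      (1 - t/2 : ℝ) • (1 + Matrix.replicateCol Unit (fun i => ((1 - t/2)⁻¹ * (t/2 * ‖v‖⁻¹)) * σ i)
        * Matrix.replicateRow Unit (fun j => v j)) := by
    ext i j
    rw [LinearMap.toMatrix_apply]
    simp [stmt6_Dmap, Matrix.mul_apply, Matrix.one_apply, b,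
      ContinuousLinearMap.smulRight_apply, real_inner_smul_left,
      EuclideanSpace.inner_single_right, mul_comm, Matrix.smul_apply]
    have hinv : (1 - t/2) * (1 - t/2)⁻¹ = 1 := mul_inv_cancel₀ hA0
    rcases eq_or_ne i j with rfl | hij
    · simp only [eq_self_iff_true, if_true]
      linear_combination (-(t/2) * σ i * v i * ‖v‖⁻¹) * hinv
    · simp only [if_neg hij]
      linear_combination (-(t/2) * σ i * v j * ‖v‖⁻¹) * hinv
  rw [hM, Matrix.det_smul, Matrix.det_one_add_replicateCol_mul_replicateRow]
  have hsum : (dotProduct (fun j => v j) fun i => (1 - t / 2)⁻¹ * (t / 2 * ‖v‖⁻¹) * σ i)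
      = (1 - t / 2)⁻¹ * (t / 2 * ‖v‖⁻¹) * ⟪σ, v⟫ := by
    have : ⟪σ, v⟫ = ∑ i, σ i * v i := by
      simp [PiLp.inner_apply, RCLike.inner_apply, conj_trivial]
      exact Finset.sum_congr rfl fun _ _ => mul_comm _ _
    rw [this, dotProduct, Finset.mul_sum]
    exact Finset.sum_congr rfl fun i _ => by ring
  rw [hsum]
  have hAinv : (0:ℝ) < (1 - t/2)⁻¹ := by positivity
  have hterm : (0:ℝ) ≤ (1 - t / 2)⁻¹ * (t / 2 * ‖v‖⁻¹) * ⟪σ, v⟫ := by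
    have := ht.1
    positivity
  have hpos : (1/8 : ℝ) ≤ (1 - t / 2) ^ Fintype.card (Fin 3) *
      (1 + (1 - t / 2)⁻¹ * (t / 2 * ‖v‖⁻¹) * ⟪σ, v⟫) := by
    simp only [Fintype.card_fin]
    have h1 : (1/2:ℝ)^3 ≤ (1 - t/2)^3 := by
      apply pow_le_pow_left₀ (by norm_num) hA
    have hA3 : (0:ℝ) < (1 - t/2)^3 := by positivity
    have h2 : (1 - t/2)^3 ≤ (1 - t/2)^3 * (1 + (1 - t / 2)⁻¹ * (t / 2 * ‖v‖⁻¹) * ⟪σ, v⟫) :=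
      le_mul_of_one_le_right hA3.le (by linarith)
    nlinarith
  calc (1/8:ℝ) ≤ _ := hpos
    _ ≤ _ := le_abs_self _

private lemma stmt6_inj_on (t : ℝ) (σ : E3) (ht : t ∈ Set.Icc (0:ℝ) 1) :
    Set.InjOn (fun v : E3 => v + t • ((1/2 : ℝ) • (v + ‖v‖ • σ) - v))
      {v : E3 | 0 < ⟪σ, v⟫} := by
  intro v hv w hw h
  simp only [Set.mem_setOf_eq] at hv hw h
  have hv0 : v ≠ 0 := by rintro rfl; simp at hv
  have hw0 : w ≠ 0 := by rintro rfl; simp at hw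
  have hnv : (0:ℝ) < ‖v‖ := norm_pos_iff.2 hv0
  have hnw : (0:ℝ) < ‖w‖ := norm_pos_iff.2 hw0
  have hA : (1/2 : ℝ) ≤ 1 - t/2 := by linarith [ht.2]
  have hA0 : (1 - t/2 : ℝ) ≠ 0 := by linarith
  have h2 : (1 - t/2) • (v - w) = (t/2 * (‖w‖ - ‖v‖)) • σ := by
    linear_combination (norm := module) h
  set c : ℝ := (1 - t/2)⁻¹ * (t/2 * (‖w‖ - ‖v‖)) with hc
  have h3 : v - w = c • σ := by
    have := congrArg (fun x => (1 - t/2)⁻¹ • x) h2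
    simpa [smul_smul, inv_mul_cancel₀ hA0] using this
  have hP : (0:ℝ) < ⟪σ, v + w⟫ := by
    rw [inner_add_right]; linarith
  have hdiff : ‖v‖^2 - ‖w‖^2 = c * ⟪σ, v + w⟫ := by
    have e1 : ⟪v - w, v + w⟫ = ‖v‖^2 - ‖w‖^2 := by
      simp only [inner_sub_left, inner_add_right]
      rw [real_inner_self_eq_norm_sq, real_inner_self_eq_norm_sq, real_inner_comm w v]
      ring
    rw [← e1, h3, real_inner_smul_left]
  have hk : (0:ℝ) ≤ (1 - t/2)⁻¹ * (t/2) * ⟪σ, v + w⟫ := by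
    have h1 : (0:ℝ) < (1 - t/2)⁻¹ := by positivity
    have := ht.1
    positivity
  have hfac : (‖v‖ - ‖w‖) * ((‖v‖ + ‖w‖) + (1 - t/2)⁻¹ * (t/2) * ⟪σ, v + w⟫) = 0 := by
    rw [hc] at hdiff
    linear_combination hdiff
  have hnorm : ‖v‖ = ‖w‖ := by
    rcases mul_eq_zero.1 hfac with h' | h'
    · linarith
    · exfalso; linarith
  have hc0 : c = 0 := by rw [hc, hnorm]; ring
  have : v - w = 0 := by rw [h3, hc0, zero_smul]
  exact sub_eq_zero.1 this

end StmtAux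

/-- For `t ∈ [0,1]` and a unit vector `σ`, the map
`v ↦ v + t(v' - v)` with `v' = (v + |v|σ)/2`, restricted to the half-space `σ·v > 0`,
has Jacobian determinant bounded below by a positive constant uniform in `t` and `σ`;
consequently `∫ |D²φ(v + t(v'-v))|² dv ≤ C ∫ |D²φ(v)|² dv` with `C` independent of
`t` and `σ` (here `g` stands for `|D²φ|²`). -/
theorem stmt6 :
    ∃ c : ℝ, 0 < c ∧ ∃ C : ℝ, 0 < C ∧
      ∀ (t : ℝ), t ∈ Set.Icc (0 : ℝ) 1 →
      ∀ (σ : EuclideanSpace ℝ (Fin 3)), ‖σ‖ = 1 →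
        (∀ v : EuclideanSpace ℝ (Fin 3), 0 < ⟪σ, v⟫ →
          ∃ D : EuclideanSpace ℝ (Fin 3) →L[ℝ] EuclideanSpace ℝ (Fin 3),
            HasFDerivAt
              (fun w : EuclideanSpace ℝ (Fin 3) =>
                w + t • ((1/2 : ℝ) • (w + ‖w‖ • σ) - w)) D v ∧
            c ≤ |LinearMap.det (D : EuclideanSpace ℝ (Fin 3) →ₗ[ℝ] EuclideanSpace ℝ (Fin 3))|) ∧
        ∀ g : EuclideanSpace ℝ (Fin 3) → ENNReal, Measurable g →
          (∫⁻ v in {v : EuclideanSpace ℝ (Fin 3) | 0 < ⟪σ, v⟫},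
              g (v + t • ((1/2 : ℝ) • (v + ‖v‖ • σ) - v)) ∂volume)
            ≤ ENNReal.ofReal C * ∫⁻ v, g v ∂volume := by
  refine ⟨1/8, by norm_num, 8, by norm_num, fun t ht σ hσ => ⟨?_, ?_⟩⟩
  · intro v hv
    have hv0 : v ≠ 0 := by rintro rfl; simp at hv
    exact ⟨stmt6_Dmap t σ v, stmt6_hasFDeriv t σ v hv0, stmt6_det_bound t σ v ht hv⟩
  · intro g hg
    set s : Set E3 := {v : E3 | 0 < ⟪σ, v⟫} with hsdef
    set f : E3 → E3 := fun v => v + t • ((1/2 : ℝ) • (v + ‖v‖ • σ) - v) with hfdef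
    have hs : MeasurableSet s := by
      have : IsOpen s := isOpen_lt continuous_const (continuous_const.inner continuous_id)
      exact this.measurableSet
    have hf' : ∀ x ∈ s, HasFDerivWithinAt f (stmt6_Dmap t σ x) s x := by
      intro x hx
      have hx0 : x ≠ 0 := by rintro rfl; simp [hsdef] at hx
      exact (stmt6_hasFDeriv t σ x hx0).hasFDerivWithinAt
    have key := lintegral_image_eq_lintegral_abs_det_fderiv_mul volume hs hf'
      (stmt6_inj_on t σ ht) g
    have step1 : (∫⁻ v in s, g (f v) ∂volume)
        ≤ ∫⁻ v in s, ENNReal.ofReal 8 *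
            (ENNReal.ofReal |LinearMap.det ((stmt6_Dmap t σ v) : E3 →ₗ[ℝ] E3)| * g (f v))
            ∂volume := by
      refine lintegral_mono_ae ?_
      filter_upwards [ae_restrict_mem hs] with v hv
      have hd := stmt6_det_bound t σ v ht hv
      have h1 : (1 : ENNReal) ≤ ENNReal.ofReal 8 *
          ENNReal.ofReal |LinearMap.det ((stmt6_Dmap t σ v) : E3 →ₗ[ℝ] E3)| := by
        rw [← ENNReal.ofReal_mul (by norm_num)]
        rw [show (1 : ENNReal) = ENNReal.ofReal 1 by simp]
        exact ENNReal.ofReal_le_ofReal (by linarith)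
      calc g (f v) = 1 * g (f v) := (one_mul _).symm
        _ ≤ (ENNReal.ofReal 8 *
              ENNReal.ofReal |LinearMap.det ((stmt6_Dmap t σ v) : E3 →ₗ[ℝ] E3)|) * g (f v) :=
          mul_le_mul_left h1 _
        _ = _ := mul_assoc _ _ _
    have step2 : (∫⁻ v in s, ENNReal.ofReal 8 *
            (ENNReal.ofReal |LinearMap.det ((stmt6_Dmap t σ v) : E3 →ₗ[ℝ] E3)| * g (f v))
            ∂volume)
        = ENNReal.ofReal 8 * ∫⁻ v in s,
            ENNReal.ofReal |LinearMap.det ((stmt6_Dmap t σ v) : E3 →ₗ[ℝ] E3)| * g (f v)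
            ∂volume := lintegral_const_mul' _ _ ENNReal.ofReal_ne_top
    have step3 : ENNReal.ofReal 8 * (∫⁻ x in f '' s, g x ∂volume)
        ≤ ENNReal.ofReal 8 * ∫⁻ x, g x ∂volume :=
      mul_le_mul_right (setLIntegral_le_lintegral _ _) _
    show (∫⁻ v in s, g (f v) ∂volume) ≤ ENNReal.ofReal 8 * ∫⁻ x, g x ∂volume
    rw [← key] at step2
    exact le_trans (le_trans step1 step2.le) step3
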